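/- Let R be a finite commutative chain ring with maximal ideal ⟨γ⟩, nilpotency index s, and residue field of size q, and set M = q/(q-1). If C ⊆ R^n is a nonzero linear code of rank K (the minimal cardinality of a generating set of C as an R-module), then the minimum homogeneous distance of C satisfies d_Hom(C) ≤ M·(n - K + 1). -/

import Mathlib

open scoped BigOperators Classical

/-- The normalized homogeneous weight on a finite chain ring with maximal ideal `⟨γ⟩`,
nilpotency index `s` and residue field of size `q`. -/
noncomputable def wtHom {R : Type*} [CommRing R] (γ : R) (s q : ℕ) (x : R) : ℚ :=
  if x = 0 then 0
  else if x ∈ Ideal.span {γ ^ (s - 1)} then (q : ℚ) / ((q : ℚ) - 1)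
  else 1

/-- Homogeneous weight of a vector: the sum of the weights of its coordinates. -/
noncomputable def wtHomV {R : Type*} [CommRing R] (γ : R) (s q : ℕ) {n : ℕ}
    (v : Fin n → R) : ℚ :=
  ∑ i, wtHom γ s q (v i)

/-- Hamming weight of a vector: the number of nonzero coordinates. -/
noncomputable def hWt {R : Type*} [Zero R] {n : ℕ} (v : Fin n → R) : ℕ :=
  Nat.card {i : Fin n // v i ≠ 0}

/-- `K` is the rank of the code `C`: the least cardinality of a generating set of `C`
as an `R`-module. -/
def IsCodeRank {R : Type*} [CommRing R] {n : ℕ} (C : Submodule R (Fin n → R)) (K : ℕ) : Prop :=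
  IsLeast {k : ℕ | ∃ S : Finset (Fin n → R),
    S.card = k ∧ Submodule.span R (S : Set (Fin n → R)) = C} K

/-- The socle of a code: the codewords all of whose coordinates lie in `⟨γ^(s-1)⟩`. -/
def socleCode {R : Type*} [CommRing R] (γ : R) (s : ℕ) {n : ℕ}
    (C : Submodule R (Fin n → R)) : Submodule R (Fin n → R) :=
  C ⊓ Submodule.pi Set.univ (fun _ : Fin n => Ideal.span {γ ^ (s - 1)})


lemma mem_span_pow_of_mul_eq_zero {R : Type*} [CommRing R] [IsLocalRing R]
    (γ : R) (s : ℕ)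
    (hmax : IsLocalRing.maximalIdeal R = Ideal.span {γ})
    (hnil : γ ^ s = 0) (hnil' : γ ^ (s - 1) ≠ 0)
    {x : R} (hx : x * γ = 0) : x ∈ Ideal.span {γ ^ (s - 1)} := by
  by_cases hx0 : x = 0
  · simp [hx0]
  classical
  set P : ℕ → Prop := fun t => x ∈ Ideal.span {γ ^ t} with hPdef
  have hP0 : P 0 := by simp [hPdef, Ideal.mem_span_singleton]
  set t := Nat.findGreatest P s with htdef
  have hPt : P t := Nat.findGreatest_spec (Nat.zero_le s) hP0
  have htle : t ≤ s := Nat.findGreatest_le s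
  rcases eq_or_lt_of_le htle with heq | hlt
  · exfalso
    have := Ideal.mem_span_singleton.mp hPt
    rw [heq, hnil] at this
    exact hx0 (zero_dvd_iff.mp this)
  · have hnot : ¬ P (t + 1) :=
      Nat.findGreatest_is_greatest (Nat.lt_succ_self t) hlt
    obtain ⟨a, ha⟩ := Ideal.mem_span_singleton'.mp hPt
    have haunit : IsUnit a := by
      by_contra h
      have hmem : a ∈ IsLocalRing.maximalIdeal R := h
      rw [hmax] at hmem
      obtain ⟨b, hb⟩ := Ideal.mem_span_singleton'.mp hmem
      exact hnot (Ideal.mem_span_singleton'.mpr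
        ⟨b, by rw [← ha, ← hb]; ring⟩)
    have hg0 : γ ^ (t + 1) = 0 := by
      have : a * γ ^ (t + 1) = 0 := by
        rw [pow_succ, ← mul_assoc, ha, hx]
      exact (IsUnit.mul_right_eq_zero haunit).mp this
    have hts : s - 1 ≤ t := by
      by_contra h
      push_neg at h
      apply hnil'
      have hsum : s - 1 = (t + 1) + (s - 1 - (t + 1)) := by omega
      rw [hsum, pow_add, hg0, zero_mul]
    refine Ideal.mem_span_singleton.mpr ?_
    have : γ ^ t = γ ^ (s - 1) * γ ^ (t - (s - 1)) := by
      rw [← pow_add]; congr 1; omega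
    exact ⟨a * γ ^ (t - (s - 1)), by rw [← ha, this]; ring⟩

lemma card_span_pow {R : Type*} [CommRing R] [IsLocalRing R] [Fintype R]
    (γ : R) (s q : ℕ)
    (hmax : IsLocalRing.maximalIdeal R = Ideal.span {γ})
    (hnil : γ ^ s = 0) (hnil' : γ ^ (s - 1) ≠ 0) (hs : 1 ≤ s)
    (hq : Nat.card (R ⧸ IsLocalRing.maximalIdeal R) = q) :
    Nat.card (Ideal.span {γ ^ (s - 1)}) = q := by
  set f := LinearMap.toSpanSingleton R R (γ ^ (s - 1)) with hf
  have hker : LinearMap.ker f = IsLocalRing.maximalIdeal R := by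
    ext x
    simp only [LinearMap.mem_ker, hf, LinearMap.toSpanSingleton_apply, smul_eq_mul]
    constructor
    · intro h
      by_contra hnu
      have : IsUnit x := by
        by_contra h2
        exact hnu h2
      exact hnil' ((IsUnit.mul_right_eq_zero this).mp h)
    · intro h
      rw [hmax] at h
      obtain ⟨b, hb⟩ := Ideal.mem_span_singleton'.mp h
      rw [← hb, mul_assoc, ← pow_succ', show s - 1 + 1 = s by omega, hnil, mul_zero]

  have hrange : LinearMap.range f = Ideal.span {γ ^ (s - 1)} := by
    rw [hf, ← LinearMap.span_singleton_eq_range]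
  have e := f.quotKerEquivRange
  rw [hker, hrange] at e
  rw [← hq]
  exact (Nat.card_congr e.toEquiv).symm

set_option maxHeartbeats 2000000 in
/-- Singleton bound for the homogeneous weight: any nonzero linear code of rank `K`
in `R^n` has minimum homogeneous distance at most `M·(n - K + 1)` where `M = q/(q-1)`. -/
theorem homogeneous_singleton_bound {R : Type*} [CommRing R] [IsLocalRing R] [Fintype R]
    (γ : R) (s q : ℕ) (hs : 1 ≤ s)
    (hmax : IsLocalRing.maximalIdeal R = Ideal.span {γ})
    (hnil : γ ^ s = 0) (hnil' : γ ^ (s - 1) ≠ 0)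
    (hq : Nat.card (R ⧸ IsLocalRing.maximalIdeal R) = q)
    {n : ℕ} (C : Submodule R (Fin n → R)) (hC : C ≠ ⊥)
    (K : ℕ) (hK : IsCodeRank C K) :
    ∃ c ∈ C, c ≠ 0 ∧
      wtHomV γ s q c ≤ (q : ℚ) / ((q : ℚ) - 1) * ((n : ℚ) - (K : ℚ) + 1) := by
  classical
  -- q ≥ 2
  have hq2 : 2 ≤ q := by
    haveI : Nontrivial (R ⧸ IsLocalRing.maximalIdeal R) :=
      Ideal.Quotient.nontrivial_iff.mpr (Ideal.IsMaximal.ne_top inferInstance)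
    haveI : Finite (R ⧸ IsLocalRing.maximalIdeal R) :=
      Finite.of_surjective _ Ideal.Quotient.mk_surjective
    rw [← hq]
    exact Finite.one_lt_card
  -- K ≥ 1
  have hK1 : 1 ≤ K := by
    by_contra h
    push_neg at h
    interval_cases K
    obtain ⟨S, hScard, hSspan⟩ := hK.1
    rw [Finset.card_eq_zero] at hScard
    subst hScard
    simp only [Finset.coe_empty, Submodule.span_empty] at hSspan
    exact hC hSspan.symm
  set I : Ideal R := Ideal.span {γ} with hI
  set μ : ↥C →ₗ[R] ↥C := LinearMap.lsmul R ↥C γ with hμ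
  set N : Submodule R ↥C := LinearMap.range μ with hN
  -- torsion structure on the quotient
  have hT : Module.IsTorsionBySet R (↥C ⧸ N) I := by
    refine (Module.isTorsionBySet_span_singleton_iff γ).mpr ?_
    intro w
    obtain ⟨x, rfl⟩ := N.mkQ_surjective w
    rw [← map_smul]
    exact (Submodule.Quotient.mk_eq_zero N).mpr ⟨x, rfl⟩
  letI : Module (R ⧸ I) (↥C ⧸ N) := hT.module
  haveI : Ideal.IsMaximal I := hmax ▸ inferInstance
  letI : Field (R ⧸ I) := Ideal.Quotient.field I
  have hqI : Nat.card (R ⧸ I) = q := by rw [← hq, hmax]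
  haveI : Finite ↥C := Subtype.finite
  haveI : Finite (↥C ⧸ N) := Finite.of_surjective _ N.mkQ_surjective
  haveI : Finite (R ⧸ I) := Finite.of_surjective _ Ideal.Quotient.mk_surjective
  haveI : Module.Finite (R ⧸ I) (↥C ⧸ N) := Module.Finite.of_finite
  set d := Module.finrank (R ⧸ I) (↥C ⧸ N) with hd
  have b : Module.Basis (Fin d) (R ⧸ I) (↥C ⧸ N) := Module.finBasis (R ⧸ I) (↥C ⧸ N)
  choose y hy using fun i => N.mkQ_surjective (b i)
  -- the lifts span C modulo N
  have hspanW : Submodule.span R (Set.range fun i => N.mkQ (y i)) = ⊤ := by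
    rw [Submodule.eq_top_iff']
    intro w
    have hw : w ∈ Submodule.span (R ⧸ I) (Set.range ⇑b) := by rw [b.span_eq]; trivial
    refine Submodule.span_induction ?_ ?_ ?_ ?_ hw
    · rintro _ ⟨i, rfl⟩
      exact Submodule.subset_span ⟨i, hy i⟩
    · exact zero_mem _
    · intro a b _ _ ha hb; exact add_mem ha hb
    · intro cc x _ hx
      obtain ⟨r, rfl⟩ := Ideal.Quotient.mk_surjective cc
      have hsm : (Ideal.Quotient.mk I r) • x = r • x := Module.IsTorsionBySet.mk_smul hT r x
      rw [hsm]
      exact Submodule.smul_mem _ r hx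
  have hsup : N ⊔ Submodule.span R (Set.range y) = ⊤ := by
    rw [← Submodule.map_mkQ_eq_top, Submodule.map_span, ← Set.range_comp]
    exact hspanW
  -- Nakayama via nilpotency
  have hpow : ∀ (t : ℕ) (x : ↥C), (μ ^ t) x = γ ^ t • x := by
    intro t
    induction t with
    | zero => intro x; simp
    | succ t ih =>
      intro x
      rw [pow_succ', Module.End.mul_apply, ih, hμ, LinearMap.lsmul_apply,
        pow_succ', mul_smul]
  have hmap_le : ∀ p : Submodule R ↥C, Submodule.map μ p ≤ p := by
    rintro p _ ⟨x, hx, rfl⟩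
    simpa [hμ] using p.smul_mem γ hx
  have hrange_succ : ∀ t : ℕ,
      LinearMap.range (μ ^ (t + 1)) = Submodule.map μ (LinearMap.range (μ ^ t)) := by
    intro t
    rw [pow_succ', Module.End.mul_eq_comp, LinearMap.range_comp]
  have hnak : ∀ t : ℕ,
      Submodule.span R (Set.range y) ⊔ LinearMap.range (μ ^ t) = ⊤ := by
    intro t
    induction t with
    | zero =>
      rw [pow_zero]
      have : LinearMap.range (1 : ↥C →ₗ[R] ↥C) = ⊤ := LinearMap.range_eq_top.mpr fun x => ⟨x, rfl⟩
      rw [this, sup_top_eq]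
    | succ t ih =>
      refine eq_top_iff.mpr ?_
      have hN' : N ≤ Submodule.span R (Set.range y) ⊔ LinearMap.range (μ ^ (t + 1)) := by
        have hNmap : N = Submodule.map μ ⊤ := (Submodule.map_top μ).symm
        rw [hNmap, ← ih, Submodule.map_sup, hrange_succ]
        exact sup_le (le_trans (hmap_le _) le_sup_left) le_sup_right
      rw [← hsup]
      exact sup_le hN' le_sup_left
  have hspan_top : Submodule.span R (Set.range y) = ⊤ := by
    have h2 := hnak s
    have hmu : μ ^ s = 0 := by
      apply LinearMap.ext
      intro x
      rw [hpow, hnil, zero_smul]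
      rfl
    rw [hmu, LinearMap.range_zero, sup_bot_eq] at h2
    exact h2
  -- K ≤ d
  have hKd : K ≤ d := by
    set S : Finset (Fin n → R) := Finset.image (fun i => (y i : Fin n → R)) Finset.univ with hS
    have hSspan : Submodule.span R (S : Set (Fin n → R)) = C := by
      have hset : (S : Set (Fin n → R)) = C.subtype '' Set.range y := by
        rw [hS, Finset.coe_image, Finset.coe_univ, Set.image_univ, ← Set.range_comp]
        rfl
      rw [hset, Submodule.span_image, hspan_top, Submodule.map_subtype_top]
    refine le_trans (hK.2 ⟨S, rfl, hSspan⟩) ?_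
    refine le_trans Finset.card_image_le ?_
    simp
  -- cardinality of ker μ
  have hcard_ker : Nat.card (LinearMap.ker μ) = Nat.card (↥C ⧸ N) := by
    have h1' := Submodule.card_eq_card_quotient_mul_card (LinearMap.ker μ)
    have h2' := Submodule.card_eq_card_quotient_mul_card N
    have h3' : Nat.card (↥C ⧸ LinearMap.ker μ) = Nat.card N :=
      Nat.card_congr μ.quotKerEquivRange.toEquiv
    rw [h3'] at h1'
    rw [h1'] at h2'
    haveI : Nonempty ↥N := ⟨0⟩
    have hNpos : 0 < Nat.card N := Nat.card_pos
    exact Nat.eq_of_mul_eq_mul_left hNpos (by linarith [h2'])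
  haveI : Fintype (↥C ⧸ N) := Fintype.ofFinite _
  haveI : Fintype (R ⧸ I) := Fintype.ofFinite _
  have hcardW : Nat.card (↥C ⧸ N) = q ^ d := by
    rw [Nat.card_eq_fintype_card, Module.card_eq_pow_finrank (K := R ⧸ I) (V := ↥C ⧸ N),
      ← Nat.card_eq_fintype_card, hqI]
  have hker_ge : q ^ K ≤ Nat.card (LinearMap.ker μ) := by
    rw [hcard_ker, hcardW]
    exact Nat.pow_le_pow_right (by omega) hKd
  -- coordinates of kernel elements lie in the socle ideal
  have hcoord : ∀ x : LinearMap.ker μ, ∀ i : Fin n,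
      ((x : ↥C) : Fin n → R) i ∈ Ideal.span {γ ^ (s - 1)} := by
    intro x i
    have h0 : γ • (x : ↥C) = 0 := by
      have h2 := x.2
      rw [LinearMap.mem_ker] at h2
      exact h2
    have hx : γ • ((x : ↥C) : Fin n → R) = 0 := by
      calc γ • ((x : ↥C) : Fin n → R) = ((γ • (x : ↥C) : ↥C) : Fin n → R) := rfl
        _ = 0 := by rw [h0]; rfl
    have hxi : ((x : ↥C) : Fin n → R) i * γ = 0 := by
      have := congrFun hx i
      simpa [mul_comm] using this
    exact mem_span_pow_of_mul_eq_zero γ s hmax hnil hnil' hxi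
  have hcardspan : Nat.card (Ideal.span {γ ^ (s - 1)}) = q :=
    card_span_pow γ s q hmax hnil hnil' hs hq
  -- K ≤ n
  have hKn : K ≤ n := by
    have hinj : Function.Injective (fun x : LinearMap.ker μ =>
        (fun i : Fin n => (⟨((x : ↥C) : Fin n → R) i, hcoord x i⟩ :
          ↥(Ideal.span {γ ^ (s - 1)})))) := by
      intro x₁ x₂ h
      apply Subtype.ext; apply Subtype.ext; funext i
      exact congrArg Subtype.val (congrFun h i)
    have hle := Nat.card_le_card_of_injective _ hinj
    rw [Nat.card_fun, hcardspan, show Nat.card (Fin n) = n by simp] at hle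
    have := le_trans hker_ge hle
    exact (Nat.pow_le_pow_iff_right (by omega)).mp this
  -- pigeonhole on first K-1 coordinates
  have hsubcard : Nat.card {i : Fin n // (i : ℕ) < K - 1} = K - 1 := by
    have e : Fin (K - 1) ≃ {i : Fin n // (i : ℕ) < K - 1} :=
      { toFun := fun j => ⟨Fin.castLE (by omega) j, j.2⟩
        invFun := fun x => ⟨x.1, x.2⟩
        left_inv := fun j => rfl
        right_inv := fun x => rfl }
    rw [← Nat.card_congr e]
    simp
  have hTcard : Nat.card ({i : Fin n // (i : ℕ) < K - 1} → ↥(Ideal.span {γ ^ (s - 1)}))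
      = q ^ (K - 1) := by
    rw [Nat.card_fun, hcardspan, hsubcard]
  haveI : Fintype (LinearMap.ker μ) := Fintype.ofFinite _
  haveI : Fintype ({i : Fin n // (i : ℕ) < K - 1} → ↥(Ideal.span {γ ^ (s - 1)})) :=
    Fintype.ofFinite _
  set Φ : LinearMap.ker μ →
      ({i : Fin n // (i : ℕ) < K - 1} → ↥(Ideal.span {γ ^ (s - 1)})) :=
    fun x j => ⟨((x : ↥C) : Fin n → R) j.1, hcoord x j.1⟩ with hΦ
  have hcardlt : Fintype.card ({i : Fin n // (i : ℕ) < K - 1} →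
      ↥(Ideal.span {γ ^ (s - 1)})) < Fintype.card (LinearMap.ker μ) := by
    rw [← Nat.card_eq_fintype_card, ← Nat.card_eq_fintype_card, hTcard]
    refine lt_of_lt_of_le ?_ hker_ge
    exact Nat.pow_lt_pow_right (by omega) (by omega)
  obtain ⟨x₁, x₂, hne, heq⟩ := Fintype.exists_ne_map_eq_of_card_lt Φ hcardlt
  set c : Fin n → R := ((x₁ : ↥C) : Fin n → R) - ((x₂ : ↥C) : Fin n → R) with hc
  have hcC : c ∈ C := sub_mem (x₁ : ↥C).2 (x₂ : ↥C).2
  have hc0 : c ≠ 0 := by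
    intro h
    apply hne
    apply Subtype.ext; apply Subtype.ext
    exact sub_eq_zero.mp h
  have hcmem : ∀ i, c i ∈ Ideal.span {γ ^ (s - 1)} := fun i =>
    sub_mem (hcoord x₁ i) (hcoord x₂ i)
  have hczero : ∀ i : Fin n, (i : ℕ) < K - 1 → c i = 0 := by
    intro i hi
    have := congrFun heq ⟨i, hi⟩
    have hval := congrArg Subtype.val this
    simp only [hΦ] at hval
    simp [hc, sub_eq_zero, hval]
  refine ⟨c, hcC, hc0, ?_⟩
  set M : ℚ := (q : ℚ) / ((q : ℚ) - 1) with hM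
  have hq2' : (2 : ℚ) ≤ (q : ℚ) := by exact_mod_cast hq2
  have hM0 : 0 ≤ M := by
    rw [hM]
    apply div_nonneg <;> linarith
  have hbound : ∀ i : Fin n, wtHom γ s q (c i) ≤ if (i : ℕ) < K - 1 then 0 else M := by
    intro i
    by_cases hi : (i : ℕ) < K - 1
    · rw [if_pos hi, hczero i hi]
      simp [wtHom]
    · rw [if_neg hi]
      unfold wtHom
      by_cases h0 : c i = 0
      · rw [if_pos h0]; exact hM0
      · rw [if_neg h0, if_pos (hcmem i)]
  have hsum : wtHomV γ s q c ≤ ∑ i : Fin n, (if (i : ℕ) < K - 1 then (0 : ℚ) else M) :=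
    Finset.sum_le_sum fun i _ => hbound i
  have hfiltercard : (Finset.univ.filter fun i : Fin n => (i : ℕ) < K - 1).card = K - 1 := by
    rw [← Fintype.card_subtype, ← Nat.card_eq_fintype_card, hsubcard]
  have hsumval : ∑ i : Fin n, (if (i : ℕ) < K - 1 then (0 : ℚ) else M)
      = M * ((n - (K - 1) : ℕ) : ℚ) := by
    rw [Finset.sum_ite, Finset.sum_const, Finset.sum_const, smul_zero, zero_add,
      Finset.filter_not, Finset.card_sdiff_of_subset (Finset.filter_subset _ _), hfiltercard]
    simp [mul_comm]
  have hcast : ((n - (K - 1) : ℕ) : ℚ) = (n : ℚ) - (K : ℚ) + 1 := by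
    have h1 : K - 1 ≤ n := by omega
    rw [Nat.cast_sub h1, Nat.cast_sub hK1, Nat.cast_one]
    ring
  calc wtHomV γ s q c ≤ _ := hsum
    _ = M * ((n - (K - 1) : ℕ) : ℚ) := hsumval
    _ = M * ((n : ℚ) - (K : ℚ) + 1) := by rw [hcast]
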